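/- arXiv:1102.5578 — 8 statements merged into one kernel-verified Lean document; each statement's English description precedes it below -/
import Mathlib

section
/- Let G be a locally finite group. For a finite subset K of G, define the equivalence relation E_K on G by a E_K b iff aK = bK (equality of left translates of K as sets). Let G⊕ be the group of permutations f of G such that for some finite K ⊆ G, every a ∈ G satisfies a E_K f(a). Then the map sending b ∈ G to right translation f_b (defined by f_b(x) = x·b) is an injective group homomorphism from G into G⊕ (with composition read as f_{b₁}·f_{b₂} = f_{b₂} ∘ f_{b₁}). -/
universe u

/-- A group is locally finite if every finitely generated subgroup is finite. -/
def IsLocallyFiniteGroup (G : Type u) [Group G] : Prop :=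
  ∀ s : Finset G, (Subgroup.closure (s : Set G) : Set G).Finite

/-- For a locally finite group `G`, each right translation `f_b = Equiv.mulRight b`
(`f_b x = x * b`) belongs to `G⊕`, i.e. for some finite `K ⊆ G` we have
`a K = f_b(a) K` for all `a`; moreover `b ↦ f_b` is injective and satisfies
`f_{b₁ b₂} = f_{b₂} ∘ f_{b₁}` (a group homomorphism into `G⊕` with opposite
composition). -/
theorem stmt0 {G : Type u} [Group G] (hlf : IsLocallyFiniteGroup G) :
    (∀ b : G, ∃ K : Finset G, ∀ a : G,
        (fun k => a * k) '' (K : Set G)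
          = (fun k => (Equiv.mulRight b a) * k) '' (K : Set G)) ∧
    Function.Injective (fun b : G => Equiv.mulRight b) ∧
    (∀ b₁ b₂ : G,
        Equiv.mulRight (b₁ * b₂) = Equiv.mulRight b₂ * Equiv.mulRight b₁) := by
  refine ⟨?_, ?_, ?_⟩
  · intro b
    have hfin := hlf {b}
    refine ⟨hfin.toFinset, fun a => ?_⟩
    have hK : (hfin.toFinset : Set G) = (Subgroup.closure ({b} : Set G) : Set G) := by
      simp
    rw [hK]
    have hb : b ∈ Subgroup.closure ({b} : Set G) :=
      Subgroup.subset_closure (by simp)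
    ext x
    simp only [Set.mem_image, Equiv.coe_mulRight]
    constructor
    · rintro ⟨k, hk, rfl⟩
      exact ⟨b⁻¹ * k, Subgroup.mul_mem _ (Subgroup.inv_mem _ hb) hk, by group⟩
    · rintro ⟨k, hk, rfl⟩
      exact ⟨b * k, Subgroup.mul_mem _ hb hk, by group⟩
  · intro b₁ b₂ h
    have := congrArg (fun e : Equiv.Perm G => e 1) h
    simpa using this
  · intro b₁ b₂
    ext x
    simp [mul_assoc]
end

section
/- Every locally finite group G embeds into a locally finite group H such that for all finite groups K ⊆ L and every embedding f : K → G, there is an embedding g : L → H with g restricted to K equal to (the inclusion of G into H composed with) f. -/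
universe u

namespace Stmt1Aux

open Subgroup Equiv

variable {G : Type u} [Group G]

/-- Decomposition of a group into cosets of a subgroup. -/
noncomputable def cosetEquiv (F : Subgroup G) : G ≃ (G ⧸ F) × F where
  toFun x := (QuotientGroup.mk x, ⟨((QuotientGroup.mk x : G ⧸ F).out)⁻¹ * x, by
    rw [← QuotientGroup.eq]
    exact QuotientGroup.out_eq' _⟩)
  invFun p := p.1.out * (p.2 : G)
  left_inv x := by simp
  right_inv := by
    rintro ⟨q, s, hs⟩
    have h1 : (QuotientGroup.mk (q.out * s) : G ⧸ F) = q := by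
      rw [QuotientGroup.mk_mul_of_mem _ hs, QuotientGroup.out_eq']
    refine Prod.ext h1 (Subtype.ext ?_)
    simp only [h1, inv_mul_cancel_left]

@[simp] lemma cosetEquiv_fst (F : Subgroup G) (x : G) :
    (cosetEquiv F x).1 = QuotientGroup.mk x := rfl

@[simp] lemma cosetEquiv_symm_apply (F : Subgroup G) (q : G ⧸ F) (s : F) :
    (cosetEquiv F).symm (q, s) = q.out * (s : G) := rfl

lemma cosetEquiv_mul_mem (F : Subgroup G) (x : G) (y : F) :
    cosetEquiv F (x * (y : G)) = ((cosetEquiv F x).1, (cosetEquiv F x).2 * y) := by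
  have h1 : (QuotientGroup.mk (x * (y : G)) : G ⧸ F) = QuotientGroup.mk x :=
    QuotientGroup.mk_mul_of_mem _ y.2
  refine Prod.ext h1 (Subtype.ext ?_)
  show ((QuotientGroup.mk (x * (y:G)) : G ⧸ F).out)⁻¹ * (x * y) = _
  rw [h1]
  show _ = ((QuotientGroup.mk x : G ⧸ F).out)⁻¹ * x * y
  rw [mul_assoc]

end Stmt1Aux

namespace Stmt1Aux

variable {G : Type u} [Group G]

/-- The block index map. -/
def blockMap (F : Subgroup G) (d : ℕ) : G × ℕ → (G ⧸ F) × ℕ :=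
  fun p => (QuotientGroup.mk p.1, p.2 / d)

lemma blockMap_mono {F F' : Subgroup G} (hF : F ≤ F') {d d' : ℕ} (hd : d ∣ d')
    {p q : G × ℕ} (h : blockMap F d p = blockMap F d q) :
    blockMap F' d' p = blockMap F' d' q := by
  obtain ⟨h1, h2⟩ := Prod.mk.injEq _ _ _ _ ▸ h
  refine Prod.ext ?_ ?_
  · exact QuotientGroup.eq.mpr (hF (QuotientGroup.eq.mp h1))
  · obtain ⟨e, rfl⟩ := hd
    show p.2 / (d * e) = q.2 / (d * e)
    rw [← Nat.div_div_eq_div_mul, ← Nat.div_div_eq_div_mul, h2]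

/-- The locally finite overgroup, as a subgroup of permutations of `G × ℕ`. -/
def HH (hlf : IsLocallyFiniteGroup G) : Subgroup (Equiv.Perm (G × ℕ)) where
  carrier := {σ | ∃ F : Subgroup G, (F : Set G).Finite ∧
    ∃ d : ℕ, 0 < d ∧ ∀ p, blockMap F d (σ p) = blockMap F d p}
  one_mem' := ⟨⊥, by simp, 1, one_pos, fun p => rfl⟩
  inv_mem' := by
    rintro σ ⟨F, hF, d, hd, h⟩
    exact ⟨F, hF, d, hd, fun p => by
      rw [← h (σ⁻¹ p), ← Equiv.Perm.mul_apply, mul_inv_cancel, Equiv.Perm.one_apply]⟩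
  mul_mem' := by
    rintro σ τ ⟨F, hF, d, hd, h⟩ ⟨F', hF', d', hd', h'⟩
    refine ⟨Subgroup.closure ((F : Set G) ∪ (F' : Set G)), ?_, d * d',
      Nat.mul_pos hd hd', fun p => ?_⟩
    · have := hlf (hF.union hF').toFinset
      rwa [Set.Finite.coe_toFinset] at this
    · have hle : F ≤ Subgroup.closure ((F : Set G) ∪ (F' : Set G)) :=
        fun x hx => Subgroup.subset_closure (Set.mem_union_left _ hx)
      have hle' : F' ≤ Subgroup.closure ((F : Set G) ∪ (F' : Set G)) :=
        fun x hx => Subgroup.subset_closure (Set.mem_union_right _ hx)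
      have e1 := blockMap_mono hle (dvd_mul_right d d') (h (τ p))
      have e2 := blockMap_mono hle' (dvd_mul_left d' d) (h' p)
      rw [Equiv.Perm.mul_apply, e1, e2]

end Stmt1Aux

namespace Stmt1Aux

section Core

variable {X I M : Type*} [Finite M]

/-- A finitely generated group of permutations preserving a partition into blocks of
uniformly bounded (finite) size is finite. -/
theorem closure_finite_of_blocks (Γ : X ≃ I × M) (s : Finset (Equiv.Perm X))
    (hs : ∀ σ ∈ s, ∀ p, (Γ (σ p)).1 = (Γ p).1) :
    (Subgroup.closure (s : Set (Equiv.Perm X)) : Set (Equiv.Perm X)).Finite := by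
  classical
  let P : Subgroup (Equiv.Perm X) :=
    { carrier := {σ | ∀ p, (Γ (σ p)).1 = (Γ p).1}
      one_mem' := fun p => rfl
      mul_mem' := by
        intro σ τ hσ hτ p
        rw [Equiv.Perm.mul_apply, hσ, hτ]
      inv_mem' := by
        intro σ hσ p
        rw [← hσ (σ⁻¹ p), ← Equiv.Perm.mul_apply, mul_inv_cancel, Equiv.Perm.one_apply] }
  have hclP : Subgroup.closure (s : Set (Equiv.Perm X)) ≤ P :=
    (Subgroup.closure_le P).mpr (fun σ hσ => hs σ hσ)
  let loc : Equiv.Perm X → I → (M → M) := fun g i v => (Γ (g (Γ.symm (i, v)))).2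
  have key : ∀ g, g ∈ P → ∀ p, Γ (g p) = ((Γ p).1, loc g (Γ p).1 (Γ p).2) := by
    intro g hg p
    refine Prod.ext (hg p) ?_
    show (Γ (g p)).2 = (Γ (g (Γ.symm ((Γ p).1, (Γ p).2)))).2
    rw [Prod.mk.eta, Equiv.symm_apply_apply]
  have hmul : ∀ g, g ∈ P → ∀ h, h ∈ P → ∀ i, loc (g * h) i = loc g i ∘ loc h i := by
    intro g hg h hh i
    funext v
    show (Γ ((g * h) (Γ.symm (i, v)))).2 = loc g i (loc h i v)
    rw [Equiv.Perm.mul_apply]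
    have h1 := key h hh (Γ.symm (i, v))
    rw [Equiv.apply_symm_apply] at h1
    have h2 := key g hg (h (Γ.symm (i, v)))
    rw [h1] at h2
    rw [h2]
  have hone : ∀ i, loc 1 i = id := by
    intro i
    funext v
    simp [loc]
  let pat : I → (↥s → (M → M)) := fun i σ => loc (σ : Equiv.Perm X) i
  have hQ : ∀ g, g ∈ Subgroup.closure (s : Set (Equiv.Perm X)) →
      ∀ i j, pat i = pat j → loc g i = loc g j := by
    intro g hg
    induction hg using Subgroup.closure_induction with
    | mem σ hσ =>
      intro i j hij
      exact congrFun hij ⟨σ, hσ⟩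
    | one =>
      intro i j _
      rw [hone, hone]
    | mul x y hx hy ihx ihy =>
      intro i j hij
      have hxP : x ∈ P := hclP hx
      have hyP : y ∈ P := hclP hy
      rw [hmul x hxP y hyP i, hmul x hxP y hyP j, ihx i j hij, ihy i j hij]
    | inv x hx ih =>
      intro i j hij
      have hxP : x ∈ P := hclP hx
      have hxP' : x⁻¹ ∈ P := P.inv_mem hxP
      have e1 : loc x⁻¹ i ∘ loc x i = id := by
        rw [← hmul _ hxP' _ hxP, inv_mul_cancel]; exact hone i
      have e2 : loc x i ∘ loc x⁻¹ j = id := by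
        rw [ih i j hij, ← hmul _ hxP _ hxP', mul_inv_cancel]; exact hone j
      calc loc x⁻¹ i = loc x⁻¹ i ∘ (loc x i ∘ loc x⁻¹ j) := by rw [e2]; rfl
        _ = (loc x⁻¹ i ∘ loc x i) ∘ loc x⁻¹ j := rfl
        _ = loc x⁻¹ j := by rw [e1]; rfl
  let enc : Equiv.Perm X → ((↥s → (M → M)) → (M → M)) :=
    fun g v => if h : ∃ i, pat i = v then loc g h.choose else id
  have hinj : Set.InjOn enc (Subgroup.closure (s : Set (Equiv.Perm X))) := by
    intro g hg g' hg' he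
    have hloc : ∀ i, loc g i = loc g' i := by
      intro i
      have hex : ∃ j, pat j = pat i := ⟨i, rfl⟩
      have h1 : enc g (pat i) = loc g i := by
        simp only [enc, dif_pos hex]
        exact hQ g hg _ i hex.choose_spec
      have h2 : enc g' (pat i) = loc g' i := by
        simp only [enc, dif_pos hex]
        exact hQ g' hg' _ i hex.choose_spec
      rw [← h1, ← h2, he]
    have hgP := hclP hg
    have hg'P := hclP hg'
    apply Equiv.ext
    intro p
    apply Γ.injective
    rw [key g hgP p, key g' hg'P p, hloc]
  exact Set.Finite.of_finite_image (Set.toFinite _) hinj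

end Core

end Stmt1Aux

namespace Stmt1Aux

variable {G : Type u} [Group G]

noncomputable def blockEquiv (F : Subgroup G) (d : ℕ) [NeZero d] :
    (G × ℕ) ≃ ((G ⧸ F) × ℕ) × (↥F × Fin d) :=
  ((cosetEquiv F).prodCongr (Nat.divModEquiv d)).trans (Equiv.prodProdProdComm _ _ _ _)

lemma blockEquiv_fst (F : Subgroup G) (d : ℕ) [NeZero d] (p : G × ℕ) :
    (blockEquiv F d p).1 = blockMap F d p := rfl

theorem HH_locallyFinite (hlf : IsLocallyFiniteGroup G) :
    IsLocallyFiniteGroup ↥(HH hlf) := by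
  classical
  intro s
  let s' : Finset (Equiv.Perm (G × ℕ)) := s.image Subtype.val
  have hdata : ∀ σ : ↥s', ∃ F : Subgroup G, (F : Set G).Finite ∧
      ∃ d : ℕ, 0 < d ∧ ∀ p, blockMap F d ((σ : Equiv.Perm (G × ℕ)) p) = blockMap F d p := by
    rintro ⟨σ, hσ⟩
    simp only [s', Finset.mem_image] at hσ
    obtain ⟨τ, _, rfl⟩ := hσ
    exact τ.property
  choose FF hFF DD hDD hB using hdata
  let Sb : Set G := ⋃ σ : ↥s', (FF σ : Set G)
  have hSb : Sb.Finite := Set.finite_iUnion hFF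
  let Fbig : Subgroup G := Subgroup.closure Sb
  have hFbig : (Fbig : Set G).Finite := by
    have := hlf hSb.toFinset
    rwa [Set.Finite.coe_toFinset] at this
  haveI : Finite ↥Fbig := hFbig.to_subtype
  let dbig : ℕ := ∏ σ : ↥s', DD σ
  have hdbig : 0 < dbig := Finset.prod_pos (fun σ _ => hDD σ)
  haveI : NeZero dbig := ⟨hdbig.ne'⟩
  have hblocks : ∀ τ ∈ s', ∀ p,
      (blockEquiv Fbig dbig (τ p)).1 = (blockEquiv Fbig dbig p).1 := by
    intro τ hτ p
    rw [blockEquiv_fst, blockEquiv_fst]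
    have hle : FF ⟨τ, hτ⟩ ≤ Fbig :=
      fun x hx => Subgroup.subset_closure (Set.mem_iUnion.mpr ⟨⟨τ, hτ⟩, hx⟩)
    have hdvd : DD ⟨τ, hτ⟩ ∣ dbig := Finset.dvd_prod_of_mem _ (Finset.mem_univ _)
    exact blockMap_mono hle hdvd (hB ⟨τ, hτ⟩ p)
  have hfin : (Subgroup.closure (s' : Set (Equiv.Perm (G × ℕ))) :
      Set (Equiv.Perm (G × ℕ))).Finite :=
    closure_finite_of_blocks (blockEquiv Fbig dbig) s' hblocks
  have hcoe : (HH hlf).subtype '' (s : Set ↥(HH hlf)) = (s' : Set (Equiv.Perm (G × ℕ))) := by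
    rw [Finset.coe_image]
    rfl
  have himg : (HH hlf).subtype '' (Subgroup.closure (s : Set ↥(HH hlf)) : Set ↥(HH hlf))
      = (Subgroup.closure (s' : Set (Equiv.Perm (G × ℕ))) : Set (Equiv.Perm (G × ℕ))) := by
    rw [← Subgroup.coe_map, MonoidHom.map_closure, hcoe]
  refine Set.Finite.of_finite_image (f := ⇑(HH hlf).subtype) ?_ (Subtype.val_injective.injOn)
  rw [himg]
  exact hfin

end Stmt1Aux

namespace Stmt1Aux

variable {G : Type u} [Group G]

/-- The embedding of `G` into permutations of `G × ℕ`, by right translation. -/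
def embPerm : G →* Equiv.Perm (G × ℕ) where
  toFun g := (Equiv.mulRight g⁻¹).prodCongr (Equiv.refl ℕ)
  map_one' := by
    apply Equiv.ext
    intro p
    simp
  map_mul' g h := by
    apply Equiv.ext
    intro p
    simp [Prod.map, mul_assoc]

@[simp] lemma embPerm_apply (g : G) (p : G × ℕ) : embPerm g p = (p.1 * g⁻¹, p.2) := rfl

lemma embPerm_injective : Function.Injective (embPerm : G →* Equiv.Perm (G × ℕ)) := by
  intro g h hgh
  have := congrArg (fun σ : Equiv.Perm (G × ℕ) => (σ (1, 0)).1) hgh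
  simpa using this

lemma embPerm_mem_HH (hlf : IsLocallyFiniteGroup G) (g : G) : embPerm g ∈ HH hlf := by
  refine ⟨Subgroup.closure {g}, ?_, 1, one_pos, fun p => ?_⟩
  · have := hlf {g}
    rwa [Finset.coe_singleton] at this
  · refine Prod.ext ?_ rfl
    exact QuotientGroup.mk_mul_of_mem p.1
      (inv_mem (Subgroup.subset_closure (Set.mem_singleton g)))

end Stmt1Aux

namespace Stmt1Aux

variable {G : Type u} [Group G]

theorem exists_extension (hlf : IsLocallyFiniteGroup G)
    {K L : Type} [Group K] [Group L] [Finite L]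
    (i : K →* L) (hi : Function.Injective i)
    (f : K →* G) (hf : Function.Injective f) :
    ∃ g : L →* Equiv.Perm (G × ℕ), Function.Injective g ∧ (∀ ℓ, g ℓ ∈ HH hlf) ∧
      ∀ x, g (i x) = embPerm (f x) := by
  classical
  haveI : Finite K := Finite.of_injective i hi
  set N : Subgroup G := f.range with hN
  set R : Subgroup L := i.range with hR
  let eN : K ≃* N := MonoidHom.ofInjective hf
  let eR : K ≃* R := MonoidHom.ofInjective hi
  let cK : G ≃ (G ⧸ N) × K :=
    (cosetEquiv N).trans ((Equiv.refl _).prodCongr eN.symm.toEquiv)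
  haveI : Finite (L ⧸ R) := Quotient.finite _
  set m : ℕ := Nat.card (L ⧸ R) with hm
  haveI : NeZero m := ⟨Nat.card_pos.ne'⟩
  let eQ : L ⧸ R ≃ Fin m := Finite.equivFin _
  let eNat : ℕ ≃ ℕ × (L ⧸ R) := (Nat.divModEquiv m).trans ((Equiv.refl ℕ).prodCongr eQ.symm)
  let dL : L ≃ (L ⧸ R) × K :=
    (cosetEquiv R).trans ((Equiv.refl _).prodCongr eR.symm.toEquiv)
  let Ξ : (G × ℕ) ≃ ((G ⧸ N) × ℕ) × L :=
    ((cK.prodCongr eNat).trans (Equiv.prodProdProdComm _ _ _ _)).trans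
      ((Equiv.refl _).prodCongr ((Equiv.prodComm K (L ⧸ R)).trans dL.symm))
  let gm : L → Equiv.Perm (G × ℕ) :=
    fun ℓ => (Ξ.trans ((Equiv.refl _).prodCongr (Equiv.mulRight ℓ⁻¹))).trans Ξ.symm
  have gm_apply : ∀ ℓ p, gm ℓ p = Ξ.symm ((Ξ p).1, (Ξ p).2 * ℓ⁻¹) := fun ℓ p => rfl
  have hXi_gm : ∀ ℓ p, Ξ (gm ℓ p) = ((Ξ p).1, (Ξ p).2 * ℓ⁻¹) := by
    intro ℓ p
    rw [gm_apply, Equiv.apply_symm_apply]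
  let gmap : L →* Equiv.Perm (G × ℕ) :=
    { toFun := gm
      map_one' := by
        apply Equiv.ext
        intro p
        rw [gm_apply]
        simp
      map_mul' := by
        intro a b
        apply Equiv.ext
        intro p
        rw [Equiv.Perm.mul_apply, gm_apply, gm_apply, gm_apply, Equiv.apply_symm_apply,
          mul_inv_rev, mul_assoc] }
  have fact1 : ∀ p, (Ξ p).1 = blockMap N m p := fun p => rfl
  -- membership in HH
  have memHH : ∀ ℓ, gmap ℓ ∈ HH hlf := by
    intro ℓ
    refine ⟨N, ?_, m, Nat.pos_of_ne_zero (NeZero.ne m), fun p => ?_⟩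
    · have h1 : (N : Set G) = Set.range f := f.coe_range
      rw [h1]
      exact Set.finite_range f
    · calc blockMap N m (gmap ℓ p) = (Ξ (gmap ℓ p)).1 := (fact1 _).symm
        _ = ((Ξ p).1, (Ξ p).2 * ℓ⁻¹).1 := by rw [show gmap ℓ p = gm ℓ p from rfl, hXi_gm]
        _ = blockMap N m p := fact1 p
  -- injectivity
  have ginj : Function.Injective gmap := by
    rw [injective_iff_map_eq_one]
    intro ℓ hℓ
    set p₀ : G × ℕ := Ξ.symm ((QuotientGroup.mk 1, 0), 1) with hp₀
    have h1 : gm ℓ p₀ = p₀ := by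
      rw [show gm ℓ = gmap ℓ from rfl, hℓ]
      rfl
    have h2 := hXi_gm ℓ p₀
    rw [h1] at h2
    have h3 : (Ξ p₀).2 * ℓ⁻¹ = (Ξ p₀).2 := congrArg Prod.snd h2.symm
    have h4 : (Ξ p₀).2 = 1 := by rw [hp₀, Equiv.apply_symm_apply]
    rw [h4] at h3
    have h5 : ℓ⁻¹ = 1 := by rwa [one_mul] at h3
    rw [← inv_inv ℓ, h5, inv_one]
  -- compatibility
  have compat : ∀ k₀ : K, gmap (i k₀) = embPerm (f k₀) := by
    intro k₀
    apply Equiv.ext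
    intro p
    suffices hS : Ξ (embPerm (f k₀) p) = ((Ξ p).1, (Ξ p).2 * (i k₀)⁻¹) by
      show Ξ.symm ((Ξ p).1, (Ξ p).2 * (i k₀)⁻¹) = embPerm (f k₀) p
      rw [← hS, Equiv.symm_apply_apply]
    obtain ⟨x, n⟩ := p
    have hXi : ∀ y : G, ∀ nn : ℕ, Ξ (y, nn) = ((QuotientGroup.mk y, nn / m),
        dL.symm (eQ.symm (Nat.divModEquiv m nn).2, eN.symm (cosetEquiv N y).2)) :=
      fun y nn => rfl
    have hemb : embPerm (f k₀) (x, n) = (x * (f k₀)⁻¹, n) := rfl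
    rw [hemb, hXi, hXi]
    set y : N := (⟨f k₀, ⟨k₀, rfl⟩⟩ : N) with hy
    have hcoe : x * (f k₀)⁻¹ = x * ((y⁻¹ : N) : G) := rfl
    have hmk : (QuotientGroup.mk (x * (f k₀)⁻¹) : G ⧸ N) = QuotientGroup.mk x := by
      rw [hcoe]
      exact QuotientGroup.mk_mul_of_mem x (y⁻¹).2
    have hsnd : (cosetEquiv N (x * (f k₀)⁻¹)).2 = (cosetEquiv N x).2 * y⁻¹ := by
      rw [hcoe, cosetEquiv_mul_mem]
    have hkN : eN.symm ((cosetEquiv N x).2 * y⁻¹) = eN.symm (cosetEquiv N x).2 * k₀⁻¹ := by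
      rw [map_mul, map_inv]
      congr 2
      have : eN k₀ = y := by
        apply Subtype.ext
        exact MonoidHom.ofInjective_apply hf
      rw [← this, MulEquiv.symm_apply_apply]
    have hdL : ∀ (q : L ⧸ R) (k : K) (k' : K),
        dL.symm (q, k * k') = dL.symm (q, k) * i k' := by
      intro q k k'
      show q.out * ((eR (k * k') : R) : L) = (q.out * ((eR k : R) : L)) * i k'
      have h6 : ((eR (k * k') : R) : L) = i k * i k' := by
        rw [map_mul]
        push_cast
        rw [MonoidHom.ofInjective_apply hi, MonoidHom.ofInjective_apply hi]
      have h7 : ((eR k : R) : L) = i k := MonoidHom.ofInjective_apply hi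
      rw [h6, h7, mul_assoc]
    rw [hmk, hsnd, hkN, hdL, map_inv]
  exact ⟨gmap, ginj, memHH, compat⟩

end Stmt1Aux


/-- Every locally finite group `G` embeds into a locally finite group `H` such that
for all finite groups `K ⊆ L` and every embedding `f : K → G`, there is an embedding
`g : L → H` extending (the composition with the inclusion `G → H` of) `f`. -/
theorem stmt1 {G : Type u} [Group G] (hlf : IsLocallyFiniteGroup G) :
    ∃ (H : GrpCat.{u}), IsLocallyFiniteGroup H ∧
      ∃ emb : G →* H, Function.Injective emb ∧
        ∀ (K L : Type) [Group K] [Group L] [Finite L] (i : K →* L),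
          Function.Injective i →
          ∀ f : K →* G, Function.Injective f →
            ∃ g : L →* H, Function.Injective g ∧ ∀ x, g (i x) = emb (f x) := by
  refine ⟨GrpCat.of ↥(Stmt1Aux.HH hlf), Stmt1Aux.HH_locallyFinite hlf, ?_⟩
  refine ⟨(Stmt1Aux.embPerm).codRestrict (Stmt1Aux.HH hlf) (Stmt1Aux.embPerm_mem_HH hlf),
    fun a b h => Stmt1Aux.embPerm_injective (congrArg Subtype.val h), ?_⟩
  intro K L _ _ _ i hi f hf
  obtain ⟨g0, ginj, memHH, compat⟩ := Stmt1Aux.exists_extension hlf i hi f hf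
  refine ⟨g0.codRestrict (Stmt1Aux.HH hlf) memHH,
    fun a b h => ginj (congrArg Subtype.val h), ?_⟩
  intro x
  exact Subtype.ext (compat x)
end

section
/- Let G₀ ⊆ G₁ and G₀ ⊆ G₂ be inclusions of groups, and for ℓ = 1,2 let I_ℓ ⊆ G_ℓ be a set of representatives of the left cosets g·G₀ in G_ℓ with e ∈ I₁ ∩ I₂. Let U be the set of triples (g₀,g₁,g₂) with g₀ ∈ G₀, g₁ ∈ I₁, g₂ ∈ I₂. For g ∈ G₁ define j₁(g) : U → U by j₁(g)(g₀,g₁,g₂) = (g₀',g₁',g₂) where g₁'·g₀' = g₁·g₀·g with g₁' ∈ I₁, g₀' ∈ G₀. Then j₁(g) is a well-defined permutation of U, and j₁ : G₁ → Perm(U) is an injective group homomorphism when Perm(U) is given the opposite composition (j₁(fh) = j₁(h) ∘ j₁(f)). -/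
universe u

/-- Coset-triple construction: given `G₀ ⊆ G₁`, `G₀ ⊆ G₂` with left coset
representative sets `I₁`, `I₂` containing the identity, and
`U = {(g₀,g₁,g₂) : g₀ ∈ G₀, g₁ ∈ I₁, g₂ ∈ I₂}`, there is a (unique, hence
well-defined) family of permutations `j₁ g` of `U` for `g ∈ G₁` acting by
`(g₀,g₁,g₂) ↦ (g₀',g₁',g₂)` where `g₁' * g₀' = g₁ * g₀ * g`; moreover
`j₁` is injective and `j₁ (f*h) = j₁ h ∘ j₁ f` (an injective homomorphism into
`Perm U` with the opposite composition). -/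
theorem stmt3 {G₀ G₁ G₂ : Type u} [Group G₀] [Group G₁] [Group G₂]
    (ι₁ : G₀ →* G₁) (ι₂ : G₀ →* G₂)
    (hι₁ : Function.Injective ι₁) (hι₂ : Function.Injective ι₂)
    (I₁ : Set G₁) (I₂ : Set G₂)
    (hone₁ : (1 : G₁) ∈ I₁) (hone₂ : (1 : G₂) ∈ I₂)
    (hrep₁ : ∀ g : G₁, ∃! r, r ∈ I₁ ∧ ∃ h : G₀, g = r * ι₁ h)
    (hrep₂ : ∀ g : G₂, ∃! r, r ∈ I₂ ∧ ∃ h : G₀, g = r * ι₂ h) :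
    ∃ j₁ : G₁ → Equiv.Perm {p : G₀ × G₁ × G₂ // p.2.1 ∈ I₁ ∧ p.2.2 ∈ I₂},
      (∀ (g : G₁) (u : {p : G₀ × G₁ × G₂ // p.2.1 ∈ I₁ ∧ p.2.2 ∈ I₂}),
          ((j₁ g u).1.2.2 = u.1.2.2) ∧
          ((j₁ g u).1.2.1 * ι₁ ((j₁ g u).1.1) = u.1.2.1 * ι₁ u.1.1 * g)) ∧
      Function.Injective j₁ ∧
      (∀ f h : G₁, j₁ (f * h) = j₁ h * j₁ f) := by
  classical
  have key : ∀ x : G₁, ∃ (s : G₁) (k : G₀), s ∈ I₁ ∧ x = s * ι₁ k ∧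
      ∀ (s' : G₁) (k' : G₀), s' ∈ I₁ → x = s' * ι₁ k' → s' = s ∧ k' = k := by
    intro x
    obtain ⟨s, ⟨hs, k, hk⟩, huniq⟩ := hrep₁ x
    refine ⟨s, k, hs, hk, ?_⟩
    intro s' k' hs' hk'
    have hss : s' = s := huniq s' ⟨hs', k', hk'⟩
    subst hss
    have hkk : ι₁ k' = ι₁ k := mul_left_cancel (hk'.symm.trans hk)
    exact ⟨rfl, hι₁ hkk⟩
  choose s k hsI hdec huniq using key
  set U := {p : G₀ × G₁ × G₂ // p.2.1 ∈ I₁ ∧ p.2.2 ∈ I₂}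
  set F : G₁ → U → U := fun g u =>
    ⟨(k (u.1.2.1 * ι₁ u.1.1 * g), s (u.1.2.1 * ι₁ u.1.1 * g), u.1.2.2),
      ⟨hsI _, u.2.2⟩⟩ with hF
  have FF : ∀ (g g' : G₁) (u : U), F g' (F g u) = F (g * g') u := by
    intro g g' u
    have hx : s (u.1.2.1 * ι₁ u.1.1 * g) * ι₁ (k (u.1.2.1 * ι₁ u.1.1 * g)) =
        u.1.2.1 * ι₁ u.1.1 * g := (hdec _).symm
    apply Subtype.ext
    simp only [hF]
    rw [hx, mul_assoc]
  have F1 : ∀ u : U, F 1 u = u := by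
    intro u
    have hx : u.1.2.1 * ι₁ u.1.1 * 1 = u.1.2.1 * ι₁ u.1.1 := mul_one _
    obtain ⟨hs', hk'⟩ := huniq (u.1.2.1 * ι₁ u.1.1 * 1) u.1.2.1 u.1.1 u.2.1 (by rw [hx])
    apply Subtype.ext
    simp only [hF]
    rw [← hs', ← hk']
  refine ⟨fun g => ⟨F g, F g⁻¹, fun u => ?_, fun u => ?_⟩, ?_, ?_, ?_⟩
  · rw [FF, mul_inv_cancel, F1]
  · rw [FF, inv_mul_cancel, F1]
  · intro g u
    exact ⟨rfl, (hdec _).symm⟩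
  · intro a b hab
    have h0 : ((1 : G₀), (1 : G₁), (1 : G₂)) ∈
        {p : G₀ × G₁ × G₂ | p.2.1 ∈ I₁ ∧ p.2.2 ∈ I₂} := ⟨hone₁, hone₂⟩
    set u₀ : U := ⟨((1 : G₀), (1 : G₁), (1 : G₂)), hone₁, hone₂⟩
    have := congrFun (congrArg (fun e : Equiv.Perm U => (e : U → U)) hab) u₀
    have hsk : s (1 * ι₁ 1 * a) = s (1 * ι₁ 1 * b) ∧
        k (1 * ι₁ 1 * a) = k (1 * ι₁ 1 * b) := by
      have h1 := congrArg (fun u : U => u.1.2.1) this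
      have h2 := congrArg (fun u : U => u.1.1) this
      exact ⟨h1, h2⟩
    have ha : a = s (1 * ι₁ 1 * a) * ι₁ (k (1 * ι₁ 1 * a)) := by
      have := hdec (1 * ι₁ 1 * a); simpa using this
    have hb : b = s (1 * ι₁ 1 * b) * ι₁ (k (1 * ι₁ 1 * b)) := by
      have := hdec (1 * ι₁ 1 * b); simpa using this
    rw [ha, hb, hsk.1, hsk.2]
  · intro f h
    apply Equiv.ext
    intro u
    show F (f * h) u = F h (F f u)
    rw [FF]
end

section
/- In the setting of the coset-triple permutation construction: with U, j₁, j₂ as above (j₂ defined symmetrically using the G₂-coordinate), the restrictions of j₁ and j₂ to G₀ coincide; i.e., for every g ∈ G₀, j₁(g) = j₂(g) as permutations of U. -/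
universe u

/-- In the coset-triple construction, the canonical actions `j₁` (of `G₁`) and
`j₂` (of `G₂`) on `U` agree on the common subgroup `G₀`: any functions
`j₁`, `j₂` satisfying the defining specifications satisfy
`j₁ (ι₁ g) = j₂ (ι₂ g)` for every `g ∈ G₀`. -/
theorem stmt4 {G₀ G₁ G₂ : Type u} [Group G₀] [Group G₁] [Group G₂]
    (ι₁ : G₀ →* G₁) (ι₂ : G₀ →* G₂)
    (hι₁ : Function.Injective ι₁) (hι₂ : Function.Injective ι₂)
    (I₁ : Set G₁) (I₂ : Set G₂)
    (hone₁ : (1 : G₁) ∈ I₁) (hone₂ : (1 : G₂) ∈ I₂)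
    (hrep₁ : ∀ g : G₁, ∃! r, r ∈ I₁ ∧ ∃ h : G₀, g = r * ι₁ h)
    (hrep₂ : ∀ g : G₂, ∃! r, r ∈ I₂ ∧ ∃ h : G₀, g = r * ι₂ h)
    (j₁ : G₁ → Equiv.Perm {p : G₀ × G₁ × G₂ // p.2.1 ∈ I₁ ∧ p.2.2 ∈ I₂})
    (j₂ : G₂ → Equiv.Perm {p : G₀ × G₁ × G₂ // p.2.1 ∈ I₁ ∧ p.2.2 ∈ I₂})
    (hj₁ : ∀ (g : G₁) (u : {p : G₀ × G₁ × G₂ // p.2.1 ∈ I₁ ∧ p.2.2 ∈ I₂}),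
        ((j₁ g u).1.2.2 = u.1.2.2) ∧
        ((j₁ g u).1.2.1 * ι₁ ((j₁ g u).1.1) = u.1.2.1 * ι₁ u.1.1 * g))
    (hj₂ : ∀ (g : G₂) (u : {p : G₀ × G₁ × G₂ // p.2.1 ∈ I₁ ∧ p.2.2 ∈ I₂}),
        ((j₂ g u).1.2.1 = u.1.2.1) ∧
        ((j₂ g u).1.2.2 * ι₂ ((j₂ g u).1.1) = u.1.2.2 * ι₂ u.1.1 * g)) :
    ∀ g : G₀, j₁ (ι₁ g) = j₂ (ι₂ g) := by
  intro g
  apply Equiv.ext; intro u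
  obtain ⟨h1, h2⟩ := hj₁ (ι₁ g) u
  obtain ⟨k1, k2⟩ := hj₂ (ι₂ g) u
  -- show both equal (u.1.1 * g, u.1.2.1, u.1.2.2)
  have h2' : (j₁ (ι₁ g) u).1.2.1 * ι₁ ((j₁ (ι₁ g) u).1.1)
      = u.1.2.1 * ι₁ (u.1.1 * g) := by rw [h2, map_mul, mul_assoc]
  have k2' : (j₂ (ι₂ g) u).1.2.2 * ι₂ ((j₂ (ι₂ g) u).1.1)
      = u.1.2.2 * ι₂ (u.1.1 * g) := by rw [k2, map_mul, mul_assoc]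
  obtain ⟨r, _, hru⟩ := hrep₁ (u.1.2.1 * ι₁ (u.1.1 * g))
  have e1 : (j₁ (ι₁ g) u).1.2.1 = u.1.2.1 := by
    rw [hru _ ⟨(j₁ (ι₁ g) u).2.1, _, h2'.symm⟩, hru _ ⟨u.2.1, _, rfl⟩]
  have e2 : (j₁ (ι₁ g) u).1.1 = u.1.1 * g := by
    apply hι₁; rw [e1] at h2'; exact mul_left_cancel h2'
  obtain ⟨s, _, hsu⟩ := hrep₂ (u.1.2.2 * ι₂ (u.1.1 * g))
  have f1 : (j₂ (ι₂ g) u).1.2.2 = u.1.2.2 := by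
    rw [hsu _ ⟨(j₂ (ι₂ g) u).2.2, _, k2'.symm⟩, hsu _ ⟨u.2.2, _, rfl⟩]
  have f2 : (j₂ (ι₂ g) u).1.1 = u.1.1 * g := by
    apply hι₂; rw [f1] at k2'; exact mul_left_cancel k2'
  have key : ((j₁ (ι₁ g)) u).1 = ((j₂ (ι₂ g)) u).1 := by
    rw [Prod.ext_iff, Prod.ext_iff]
    exact ⟨e2.trans f2.symm, e1.trans k1.symm, h1.trans f1.symm⟩
  exact Subtype.ext key
end

section
/- In the coset-triple permutation construction, the images of G₁ and G₂ intersect exactly in the image of G₀: if a₁ ∈ G₁, a₂ ∈ G₂ and j₁(a₁) = j₂(a₂) as permutations of U, then a₁ = a₂ ∈ G₀. In particular j₁(G₁) ∩ j₂(G₂) = j₁(G₀) inside Perm(U). -/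
universe u

/-- In the coset-triple construction the images of `G₁` and `G₂` in `Perm U`
intersect exactly in the image of `G₀`: if `j₁ a₁ = j₂ a₂` then `a₁` and `a₂`
are the images under `ι₁`, `ι₂` of a common element `g₀ ∈ G₀`. -/
theorem stmt5 {G₀ G₁ G₂ : Type u} [Group G₀] [Group G₁] [Group G₂]
    (ι₁ : G₀ →* G₁) (ι₂ : G₀ →* G₂)
    (hι₁ : Function.Injective ι₁) (hι₂ : Function.Injective ι₂)
    (I₁ : Set G₁) (I₂ : Set G₂)
    (hone₁ : (1 : G₁) ∈ I₁) (hone₂ : (1 : G₂) ∈ I₂)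
    (hrep₁ : ∀ g : G₁, ∃! r, r ∈ I₁ ∧ ∃ h : G₀, g = r * ι₁ h)
    (hrep₂ : ∀ g : G₂, ∃! r, r ∈ I₂ ∧ ∃ h : G₀, g = r * ι₂ h)
    (j₁ : G₁ → Equiv.Perm {p : G₀ × G₁ × G₂ // p.2.1 ∈ I₁ ∧ p.2.2 ∈ I₂})
    (j₂ : G₂ → Equiv.Perm {p : G₀ × G₁ × G₂ // p.2.1 ∈ I₁ ∧ p.2.2 ∈ I₂})
    (hj₁ : ∀ (g : G₁) (u : {p : G₀ × G₁ × G₂ // p.2.1 ∈ I₁ ∧ p.2.2 ∈ I₂}),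
        ((j₁ g u).1.2.2 = u.1.2.2) ∧
        ((j₁ g u).1.2.1 * ι₁ ((j₁ g u).1.1) = u.1.2.1 * ι₁ u.1.1 * g))
    (hj₂ : ∀ (g : G₂) (u : {p : G₀ × G₁ × G₂ // p.2.1 ∈ I₁ ∧ p.2.2 ∈ I₂}),
        ((j₂ g u).1.2.1 = u.1.2.1) ∧
        ((j₂ g u).1.2.2 * ι₂ ((j₂ g u).1.1) = u.1.2.2 * ι₂ u.1.1 * g)) :
    ∀ (a₁ : G₁) (a₂ : G₂), j₁ a₁ = j₂ a₂ →
      ∃ g₀ : G₀, a₁ = ι₁ g₀ ∧ a₂ = ι₂ g₀ := by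
  intro a₁ a₂ h
  set u₀ : {p : G₀ × G₁ × G₂ // p.2.1 ∈ I₁ ∧ p.2.2 ∈ I₂} :=
    ⟨(1, 1, 1), ⟨hone₁, hone₂⟩⟩ with hu₀
  obtain ⟨h1a, h1b⟩ := hj₁ a₁ u₀
  obtain ⟨h2a, h2b⟩ := hj₂ a₂ u₀
  rw [h] at h1a h1b
  refine ⟨(j₂ a₂ u₀).1.1, ?_, ?_⟩
  · have : (j₂ a₂ u₀).1.2.1 = 1 := h2a
    rw [this] at h1b
    simpa [hu₀] using h1b.symm
  · have : (j₂ a₂ u₀).1.2.2 = 1 := h1a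
    rw [this] at h2b
    simpa [hu₀] using h2b.symm
end

section
/- If G₀, G₁, G₂ are finite groups with G₀ ⊆ G₁ and G₀ ⊆ G₂, and G_x ≤ Perm(U) is the subgroup generated by j₁(G₁) ∪ j₂(G₂) in the coset-triple permutation construction, then |G_x| ≤ ((|G₁|·|G₂|/|G₀|)!). In particular G_x is a finite group into which both G₁ and G₂ embed with the embeddings agreeing on G₀. -/
universe u

/-- If `G₀ ⊆ G₁`, `G₀ ⊆ G₂` are finite groups then in the coset-triple
construction the subgroup `G_x` of `Perm U` generated by the images of `G₁`
and `G₂` has at most `((|G₁|·|G₂|/|G₀|)!)` elements; in particular it is a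
finite group into which `G₁` and `G₂` embed with the embeddings agreeing
on `G₀`. -/
theorem stmt6 {G₀ G₁ G₂ : Type u} [Group G₀] [Group G₁] [Group G₂]
    [Finite G₀] [Finite G₁] [Finite G₂]
    (ι₁ : G₀ →* G₁) (ι₂ : G₀ →* G₂)
    (hι₁ : Function.Injective ι₁) (hι₂ : Function.Injective ι₂)
    (I₁ : Set G₁) (I₂ : Set G₂)
    (hone₁ : (1 : G₁) ∈ I₁) (hone₂ : (1 : G₂) ∈ I₂)
    (hrep₁ : ∀ g : G₁, ∃! r, r ∈ I₁ ∧ ∃ h : G₀, g = r * ι₁ h)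
    (hrep₂ : ∀ g : G₂, ∃! r, r ∈ I₂ ∧ ∃ h : G₀, g = r * ι₂ h)
    (j₁ : G₁ → Equiv.Perm {p : G₀ × G₁ × G₂ // p.2.1 ∈ I₁ ∧ p.2.2 ∈ I₂})
    (j₂ : G₂ → Equiv.Perm {p : G₀ × G₁ × G₂ // p.2.1 ∈ I₁ ∧ p.2.2 ∈ I₂})
    (hj₁ : ∀ (g : G₁) (u : {p : G₀ × G₁ × G₂ // p.2.1 ∈ I₁ ∧ p.2.2 ∈ I₂}),
        ((j₁ g u).1.2.2 = u.1.2.2) ∧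
        ((j₁ g u).1.2.1 * ι₁ ((j₁ g u).1.1) = u.1.2.1 * ι₁ u.1.1 * g))
    (hj₂ : ∀ (g : G₂) (u : {p : G₀ × G₁ × G₂ // p.2.1 ∈ I₁ ∧ p.2.2 ∈ I₂}),
        ((j₂ g u).1.2.1 = u.1.2.1) ∧
        ((j₂ g u).1.2.2 * ι₂ ((j₂ g u).1.1) = u.1.2.2 * ι₂ u.1.1 * g)) :
    Nat.card ↥(Subgroup.closure (Set.range j₁ ∪ Set.range j₂))
        ≤ Nat.factorial (Nat.card G₁ * Nat.card G₂ / Nat.card G₀) ∧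
    Function.Injective j₁ ∧ Function.Injective j₂ ∧
    (∀ g : G₀, j₁ (ι₁ g) = j₂ (ι₂ g)) := by
  have hbij₁ : Function.Bijective (fun x : G₀ × I₁ => (x.2 : G₁) * ι₁ x.1) := by
    constructor
    · rintro ⟨h, r⟩ ⟨h', r'⟩ (heq : (r : G₁) * ι₁ h = (r' : G₁) * ι₁ h')
      obtain ⟨r₀, _, hu⟩ := hrep₁ ((r : G₁) * ι₁ h)
      have e1 : (r : G₁) = r₀ := hu r ⟨r.2, h, rfl⟩
      have e2 : (r' : G₁) = r₀ := hu r' ⟨r'.2, h', heq⟩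
      have hr : (r : G₁) = r' := e1.trans e2.symm
      have : ι₁ h = ι₁ h' := by
        have := heq; rw [hr] at this; exact mul_left_cancel this
      exact Prod.ext (hι₁ this) (Subtype.ext hr)
    · intro g
      obtain ⟨r, ⟨hrI, h, hg⟩, _⟩ := hrep₁ g
      exact ⟨(h, ⟨r, hrI⟩), hg.symm⟩
  have hbij₂ : Function.Bijective (fun x : G₀ × I₂ => (x.2 : G₂) * ι₂ x.1) := by
    constructor
    · rintro ⟨h, r⟩ ⟨h', r'⟩ (heq : (r : G₂) * ι₂ h = (r' : G₂) * ι₂ h')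
      obtain ⟨r₀, _, hu⟩ := hrep₂ ((r : G₂) * ι₂ h)
      have e1 : (r : G₂) = r₀ := hu r ⟨r.2, h, rfl⟩
      have e2 : (r' : G₂) = r₀ := hu r' ⟨r'.2, h', heq⟩
      have hr : (r : G₂) = r' := e1.trans e2.symm
      have : ι₂ h = ι₂ h' := by
        have := heq; rw [hr] at this; exact mul_left_cancel this
      exact Prod.ext (hι₂ this) (Subtype.ext hr)
    · intro g
      obtain ⟨r, ⟨hrI, h, hg⟩, _⟩ := hrep₂ g
      exact ⟨(h, ⟨r, hrI⟩), hg.symm⟩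
  have hcard₁ : Nat.card G₀ * Nat.card I₁ = Nat.card G₁ := by
    rw [← Nat.card_prod]; exact Nat.card_congr (Equiv.ofBijective _ hbij₁)
  have hcard₂ : Nat.card G₀ * Nat.card I₂ = Nat.card G₂ := by
    rw [← Nat.card_prod]; exact Nat.card_congr (Equiv.ofBijective _ hbij₂)
  have hg0 : 0 < Nat.card G₀ := Nat.card_pos
  have eU : {p : G₀ × G₁ × G₂ // p.2.1 ∈ I₁ ∧ p.2.2 ∈ I₂} ≃ G₀ × I₁ × I₂ :=
    { toFun := fun u => (u.1.1, ⟨u.1.2.1, u.2.1⟩, ⟨u.1.2.2, u.2.2⟩)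
      invFun := fun x => ⟨(x.1, x.2.1, x.2.2), x.2.1.2, x.2.2.2⟩
      left_inv := fun u => rfl
      right_inv := fun x => rfl }
  have hUcard : Nat.card {p : G₀ × G₁ × G₂ // p.2.1 ∈ I₁ ∧ p.2.2 ∈ I₂}
      = Nat.card G₁ * Nat.card G₂ / Nat.card G₀ := by
    have h0 : Nat.card {p : G₀ × G₁ × G₂ // p.2.1 ∈ I₁ ∧ p.2.2 ∈ I₂}
        = Nat.card G₀ * (Nat.card I₁ * Nat.card I₂) := by
      rw [Nat.card_congr eU, Nat.card_prod, Nat.card_prod]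
    rw [h0, ← hcard₁, ← hcard₂,
      show Nat.card G₀ * Nat.card I₁ * (Nat.card G₀ * Nat.card I₂)
        = Nat.card G₀ * (Nat.card I₁ * Nat.card I₂) * Nat.card G₀ by ring,
      Nat.mul_div_cancel _ hg0]
  have one_mem : (((1 : G₀), (1 : G₁), (1 : G₂)) : G₀ × G₁ × G₂).2.1 ∈ I₁ ∧
      (((1 : G₀), (1 : G₁), (1 : G₂)) : G₀ × G₁ × G₂).2.2 ∈ I₂ := ⟨hone₁, hone₂⟩
  refine ⟨?_, ?_, ?_, ?_⟩
  · haveI : Finite {p : G₀ × G₁ × G₂ // p.2.1 ∈ I₁ ∧ p.2.2 ∈ I₂} :=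
      Finite.of_equiv _ eU.symm
    calc Nat.card ↥(Subgroup.closure (Set.range j₁ ∪ Set.range j₂))
        ≤ Nat.card (Equiv.Perm {p : G₀ × G₁ × G₂ // p.2.1 ∈ I₁ ∧ p.2.2 ∈ I₂}) :=
          Nat.card_le_card_of_injective _ Subtype.val_injective
      _ = Nat.factorial (Nat.card {p : G₀ × G₁ × G₂ // p.2.1 ∈ I₁ ∧ p.2.2 ∈ I₂}) := by
          letI := Classical.decEq {p : G₀ × G₁ × G₂ // p.2.1 ∈ I₁ ∧ p.2.2 ∈ I₂}
          letI : Fintype {p : G₀ × G₁ × G₂ // p.2.1 ∈ I₁ ∧ p.2.2 ∈ I₂} := Fintype.ofFinite _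
          rw [Nat.card_eq_fintype_card, Nat.card_eq_fintype_card, Fintype.card_perm]
      _ = Nat.factorial (Nat.card G₁ * Nat.card G₂ / Nat.card G₀) := by rw [hUcard]
  · intro g g' h
    have h1 := (hj₁ g ⟨(1, 1, 1), one_mem⟩).2
    have h2 := (hj₁ g' ⟨(1, 1, 1), one_mem⟩).2
    rw [h] at h1
    simp only [map_one, one_mul, mul_one] at h1 h2
    exact h1.symm.trans h2
  · intro g g' h
    have h1 := (hj₂ g ⟨(1, 1, 1), one_mem⟩).2
    have h2 := (hj₂ g' ⟨(1, 1, 1), one_mem⟩).2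
    rw [h] at h1
    simp only [map_one, one_mul, mul_one] at h1 h2
    exact h1.symm.trans h2
  · intro g
    apply Equiv.ext
    intro u
    obtain ⟨hv3, hv1⟩ := hj₁ (ι₁ g) u
    obtain ⟨hw2, hw1⟩ := hj₂ (ι₂ g) u
    have key₁ : ((j₁ (ι₁ g) u).1.2.1 = u.1.2.1) ∧ (j₁ (ι₁ g) u).1.1 = u.1.1 * g := by
      obtain ⟨r₀, _, hu⟩ := hrep₁ (u.1.2.1 * ι₁ (u.1.1 * g))
      have hx : u.1.2.1 * ι₁ (u.1.1 * g) = u.1.2.1 * ι₁ u.1.1 * ι₁ g := by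
        rw [map_mul, mul_assoc]
      have e1 : (j₁ (ι₁ g) u).1.2.1 = r₀ :=
        hu _ ⟨(j₁ (ι₁ g) u).2.1, (j₁ (ι₁ g) u).1.1, by rw [hx, ← hv1]⟩
      have e2 : u.1.2.1 = r₀ := hu _ ⟨u.2.1, u.1.1 * g, rfl⟩
      have hr : (j₁ (ι₁ g) u).1.2.1 = u.1.2.1 := e1.trans e2.symm
      refine ⟨hr, hι₁ ?_⟩
      have h5 := hv1
      rw [hr, mul_assoc, ← map_mul] at h5
      exact mul_left_cancel h5
    have key₂ : ((j₂ (ι₂ g) u).1.2.2 = u.1.2.2) ∧ (j₂ (ι₂ g) u).1.1 = u.1.1 * g := by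
      obtain ⟨r₀, _, hu⟩ := hrep₂ (u.1.2.2 * ι₂ (u.1.1 * g))
      have hx : u.1.2.2 * ι₂ (u.1.1 * g) = u.1.2.2 * ι₂ u.1.1 * ι₂ g := by
        rw [map_mul, mul_assoc]
      have e1 : (j₂ (ι₂ g) u).1.2.2 = r₀ :=
        hu _ ⟨(j₂ (ι₂ g) u).2.2, (j₂ (ι₂ g) u).1.1, by rw [hx, ← hw1]⟩
      have e2 : u.1.2.2 = r₀ := hu _ ⟨u.2.2, u.1.1 * g, rfl⟩
      have hr : (j₂ (ι₂ g) u).1.2.2 = u.1.2.2 := e1.trans e2.symm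
      refine ⟨hr, hι₂ ?_⟩
      have h5 := hw1
      rw [hr, mul_assoc, ← map_mul] at h5
      exact mul_left_cancel h5
    apply Subtype.ext
    have hvv : (j₁ (ι₁ g) u).1 = (u.1.1 * g, u.1.2.1, u.1.2.2) :=
      Prod.ext key₁.2 (Prod.ext key₁.1 hv3)
    have hww : (j₂ (ι₂ g) u).1 = (u.1.1 * g, u.1.2.1, u.1.2.2) :=
      Prod.ext key₂.2 (Prod.ext hw2 key₂.1)
    rw [hvv, hww]
end

section
/- The class of finite groups has the amalgamation property: if G₀ ⊆ G₁ and G₀ ⊆ G₂ are finite groups, then there exist a finite group G₃ and embeddings f₁ : G₁ → G₃, f₂ : G₂ → G₃ with f₁ and f₂ agreeing on G₀. Moreover G₃ can be chosen so that f₁(G₁) ∩ f₂(G₂) = f₁(G₀) (disjoint amalgamation). -/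
universe u

section Aux
variable {G₀ G : Type u} [Group G₀] [Group G]

noncomputable def auxMap (ι : G₀ →* G) (h : Function.Injective ι) (x : G) : G₀ :=
  (MonoidHom.ofInjective h).symm
    ⟨(QuotientGroup.mk x : G ⧸ ι.range).out⁻¹ * x, by
      rw [← QuotientGroup.eq, QuotientGroup.out_eq']⟩

lemma auxMap_spec (ι : G₀ →* G) (h : Function.Injective ι) (x : G) :
    ι (auxMap ι h x) = (QuotientGroup.mk x : G ⧸ ι.range).out⁻¹ * x := by
  have := congrArg Subtype.val
    ((MonoidHom.ofInjective h).apply_symm_apply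
      ⟨(QuotientGroup.mk x : G ⧸ ι.range).out⁻¹ * x, by
        rw [← QuotientGroup.eq, QuotientGroup.out_eq']⟩)
  simpa [auxMap, MonoidHom.ofInjective_apply] using this

noncomputable def auxEquiv (ι : G₀ →* G) (h : Function.Injective ι) :
    G ≃ (G ⧸ ι.range) × G₀ where
  toFun x := (QuotientGroup.mk x, auxMap ι h x)
  invFun p := p.1.out * ι p.2
  left_inv x := by
    show (QuotientGroup.mk x : G ⧸ ι.range).out * ι (auxMap ι h x) = x
    rw [auxMap_spec]; group
  right_inv p := by
    obtain ⟨c, a⟩ := p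
    have hc : (QuotientGroup.mk (c.out * ι a) : G ⧸ ι.range) = c := by
      rw [QuotientGroup.mk_mul_of_mem _ (MonoidHom.mem_range.2 ⟨a, rfl⟩), QuotientGroup.out_eq']
    have ha : auxMap ι h (c.out * ι a) = a := by
      apply h
      rw [auxMap_spec, hc]
      group
    simp [hc, ha]

lemma auxEquiv_fst (ι : G₀ →* G) (h : Function.Injective ι) (x : G) :
    (auxEquiv ι h x).1 = QuotientGroup.mk x := rfl

lemma auxEquiv_mul (ι : G₀ →* G) (h : Function.Injective ι) (x : G) (a : G₀) :
    auxEquiv ι h (x * ι a) = ((auxEquiv ι h x).1, (auxEquiv ι h x).2 * a) := by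
  have hc : (QuotientGroup.mk (x * ι a) : G ⧸ ι.range) = QuotientGroup.mk x :=
    QuotientGroup.mk_mul_of_mem _ (MonoidHom.mem_range.2 ⟨a, rfl⟩)
  have ha : auxMap ι h (x * ι a) = auxMap ι h x * a := by
    apply h
    rw [map_mul, auxMap_spec, auxMap_spec, hc, mul_assoc]
  simp [auxEquiv, hc, ha]

/-- Conjugation of permutation groups by an equivalence, as a monoid hom. -/
def conjHom {α β : Type u} (e : α ≃ β) : Equiv.Perm α →* Equiv.Perm β where
  toFun σ := e.permCongr σ
  map_one' := by ext x; simp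
  map_mul' σ τ := by ext x; simp [Equiv.permCongr_apply]

/-- The right regular representation. -/
def rightRegular (G : Type u) [Group G] : G →* Equiv.Perm G where
  toFun g := Equiv.mulRight g⁻¹
  map_one' := by ext x; simp
  map_mul' g h := by ext x; simp [mul_assoc]

def prodLeftHom {α β : Type u} : Equiv.Perm α →* Equiv.Perm (α × β) where
  toFun σ := σ.prodCongr (Equiv.refl β)
  map_one' := by ext x <;> simp
  map_mul' σ τ := by ext x <;> simp

def prodRightHom {α β : Type u} : Equiv.Perm β →* Equiv.Perm (α × β) where
  toFun σ := (Equiv.refl α).prodCongr σ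
  map_one' := by ext x <;> simp
  map_mul' σ τ := by ext x <;> simp

end Aux

section Main
variable {G₀ G₁ G₂ : Type u} [Group G₀] [Group G₁] [Group G₂]
  (ι₁ : G₀ →* G₁) (ι₂ : G₀ →* G₂)

/-- The ambient set. -/
def AmbX (ι₁ : G₀ →* G₁) (ι₂ : G₀ →* G₂) : Type u :=
  ((G₁ ⧸ ι₁.range) × G₀) × (G₂ ⧸ ι₂.range)

noncomputable def T₁ (h₁ : Function.Injective ι₁) :
    G₁ × (G₂ ⧸ ι₂.range) ≃ AmbX ι₁ ι₂ :=
  (auxEquiv ι₁ h₁).prodCongr (Equiv.refl _)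

noncomputable def T₂ (h₂ : Function.Injective ι₂) :
    (G₁ ⧸ ι₁.range) × G₂ ≃ AmbX ι₁ ι₂ where
  toFun p := ((p.1, (auxEquiv ι₂ h₂ p.2).2), (auxEquiv ι₂ h₂ p.2).1)
  invFun q := (q.1.1, (auxEquiv ι₂ h₂).symm (q.2, q.1.2))
  left_inv p := by simp
  right_inv q := by simp; rfl

noncomputable def amalF₁ (h₁ : Function.Injective ι₁) :
    G₁ →* Equiv.Perm (AmbX ι₁ ι₂) :=
  (conjHom (T₁ ι₁ ι₂ h₁)).comp (prodLeftHom.comp (rightRegular G₁))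

noncomputable def amalF₂ (h₂ : Function.Injective ι₂) :
    G₂ →* Equiv.Perm (AmbX ι₁ ι₂) :=
  (conjHom (T₂ ι₁ ι₂ h₂)).comp (prodRightHom.comp (rightRegular G₂))

variable (h₁ : Function.Injective ι₁) (h₂ : Function.Injective ι₂)

lemma amalF₁_apply (g : G₁) (c : G₁ ⧸ ι₁.range) (a : G₀) (d : G₂ ⧸ ι₂.range) :
    amalF₁ ι₁ ι₂ h₁ g ((c, a), d) =
      (auxEquiv ι₁ h₁ ((auxEquiv ι₁ h₁).symm (c, a) * g⁻¹), d) := rfl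

lemma amalF₂_apply (g : G₂) (c : G₁ ⧸ ι₁.range) (a : G₀) (d : G₂ ⧸ ι₂.range) :
    amalF₂ ι₁ ι₂ h₂ g ((c, a), d) =
      ((c, (auxEquiv ι₂ h₂ ((auxEquiv ι₂ h₂).symm (d, a) * g⁻¹)).2),
        (auxEquiv ι₂ h₂ ((auxEquiv ι₂ h₂).symm (d, a) * g⁻¹)).1) := rfl

end Main

section Main2
variable {G₀ G₁ G₂ : Type u} [Group G₀] [Group G₁] [Group G₂]
  (ι₁ : G₀ →* G₁) (ι₂ : G₀ →* G₂)
  (h₁ : Function.Injective ι₁) (h₂ : Function.Injective ι₂)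

lemma amal_agree (a₀ : G₀) :
    amalF₁ ι₁ ι₂ h₁ (ι₁ a₀) = amalF₂ ι₁ ι₂ h₂ (ι₂ a₀) := by
  ext p
  obtain ⟨⟨c, a⟩, d⟩ := p
  rw [amalF₁_apply, amalF₂_apply, ← map_inv ι₁, ← map_inv ι₂,
    auxEquiv_mul, auxEquiv_mul, Equiv.apply_symm_apply, Equiv.apply_symm_apply]

instance amal_finite [Finite G₀] [Finite G₁] [Finite G₂] : Finite (AmbX ι₁ ι₂) := by
  unfold AmbX; infer_instance

lemma amalF₁_inj : Function.Injective ⇑(amalF₁ ι₁ ι₂ h₁) := by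
  intro g g' hgg
  have key : amalF₁ ι₁ ι₂ h₁ g (((auxEquiv ι₁ h₁ 1).1, (auxEquiv ι₁ h₁ 1).2),
      QuotientGroup.mk 1) = amalF₁ ι₁ ι₂ h₁ g' (((auxEquiv ι₁ h₁ 1).1,
      (auxEquiv ι₁ h₁ 1).2), QuotientGroup.mk 1) := by rw [hgg]
  rw [amalF₁_apply, amalF₁_apply] at key
  simp only [Prod.mk.eta, Equiv.symm_apply_apply, one_mul] at key
  have := (auxEquiv ι₁ h₁).injective (congrArg Prod.fst key)
  exact inv_injective this

lemma amalF₂_inj : Function.Injective ⇑(amalF₂ ι₁ ι₂ h₂) := by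
  intro g g' hgg
  have key : amalF₂ ι₁ ι₂ h₂ g ((QuotientGroup.mk 1, (auxEquiv ι₂ h₂ 1).2),
      (auxEquiv ι₂ h₂ 1).1) = amalF₂ ι₁ ι₂ h₂ g' ((QuotientGroup.mk 1,
      (auxEquiv ι₂ h₂ 1).2), (auxEquiv ι₂ h₂ 1).1) := by rw [hgg]
  rw [amalF₂_apply, amalF₂_apply] at key
  simp only [Prod.mk.eta, Equiv.symm_apply_apply, one_mul] at key
  have ha := congrArg (fun q => q.1.2) key
  have hb := congrArg Prod.snd key
  simp only at ha hb
  have : auxEquiv ι₂ h₂ g⁻¹ = auxEquiv ι₂ h₂ g'⁻¹ := Prod.ext hb ha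
  exact inv_injective ((auxEquiv ι₂ h₂).injective this)

end Main2


/-- The class of finite groups has the disjoint amalgamation property: two finite
groups `G₁`, `G₂` with a common finite subgroup `G₀` embed compatibly into a
finite group `G₃`, with the images of `G₁` and `G₂` meeting exactly in the image
of `G₀`. -/
theorem stmt7 {G₀ G₁ G₂ : Type u} [Group G₀] [Group G₁] [Group G₂]
    [Finite G₀] [Finite G₁] [Finite G₂]
    (ι₁ : G₀ →* G₁) (ι₂ : G₀ →* G₂)
    (h₁ : Function.Injective ι₁) (h₂ : Function.Injective ι₂) :
    ∃ (G₃ : GrpCat.{u}) (f₁ : G₁ →* G₃) (f₂ : G₂ →* G₃),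
      Finite G₃ ∧ Function.Injective f₁ ∧ Function.Injective f₂ ∧
      (∀ g : G₀, f₁ (ι₁ g) = f₂ (ι₂ g)) ∧
      Set.range f₁ ∩ Set.range f₂ = f₁ '' Set.range ι₁ := by
  classical
  refine ⟨GrpCat.of (Equiv.Perm (AmbX ι₁ ι₂)), amalF₁ ι₁ ι₂ h₁, amalF₂ ι₁ ι₂ h₂,
    ?_, amalF₁_inj ι₁ ι₂ h₁, amalF₂_inj ι₁ ι₂ h₂, amal_agree ι₁ ι₂ h₁ h₂, ?_⟩
  · show Finite (Equiv.Perm (AmbX ι₁ ι₂)); infer_instance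
  · ext σ
    constructor
    · rintro ⟨⟨g₁, rfl⟩, g₂, hg₂⟩
      have hg₂' : amalF₂ ι₁ ι₂ h₂ g₂ = amalF₁ ι₁ ι₂ h₁ g₁ := hg₂
      have key : amalF₂ ι₁ ι₂ h₂ g₂ (((auxEquiv ι₁ h₁ 1).1, (auxEquiv ι₁ h₁ 1).2),
          QuotientGroup.mk 1) = amalF₁ ι₁ ι₂ h₁ g₁ (((auxEquiv ι₁ h₁ 1).1,
          (auxEquiv ι₁ h₁ 1).2), QuotientGroup.mk 1) := by rw [hg₂']
      rw [amalF₂_apply, amalF₁_apply] at key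
      have hfst := congrArg (fun q => q.1.1) key
      simp only [Prod.mk.eta, Equiv.symm_apply_apply, one_mul] at hfst
      rw [auxEquiv_fst, auxEquiv_fst] at hfst
      have hmem : g₁⁻¹ ∈ ι₁.range := by
        have := QuotientGroup.eq.mp hfst
        simpa using this
      obtain ⟨a₀, ha₀⟩ := MonoidHom.mem_range.1 (ι₁.range.inv_mem hmem)
      rw [inv_inv] at ha₀
      exact ⟨ι₁ a₀, ⟨a₀, rfl⟩, by rw [ha₀]⟩
    · rintro ⟨x, ⟨a₀, rfl⟩, rfl⟩
      exact ⟨Set.mem_range_self _, ι₂ a₀, (amal_agree ι₁ ι₂ h₁ h₂ a₀).symm⟩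
end

section
/- Preservation of commutation in the coset-triple amalgam: assume G₀ ⊆ G₁, G₀ ⊆ G₂ with coset representative sets I₁, I₂ as in the coset-triple construction; assume H₁ ⊆ G₁ is a subgroup with H₀ = H₁ ∩ G₀, such that H₁ commutes elementwise with G₀, H₁ is the union of the cosets b·H₀ for b ∈ I₁ ∩ H₁, and I₁ is closed under right multiplication by elements of I₁ ∩ H₁ (g ∈ I₁, b ∈ I₁ ∩ H₁ ⟹ gb ∈ I₁); assume H₂ ⊆ G₂ commutes elementwise with H₀ and H₂ is the union of the cosets b·H₀ for b ∈ I₂ ∩ H₂. Then the images j₁(H₁) and j₂(H₂) commute elementwise in the permutation group Perm(U) of the coset-triple construction. -/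
universe u

/-- Preservation of commutation in the coset-triple amalgam: if `H₁ ⊆ G₁`
commutes elementwise with `G₀` (with `H₀ = H₁ ∩ G₀`), `H₁` is the union of the
cosets `b·H₀` for `b ∈ I₁ ∩ H₁`, `I₁` is closed under right multiplication by
elements of `I₁ ∩ H₁`, and `H₂ ⊆ G₂` commutes elementwise with `H₀` and is the
union of the cosets `b·H₀` for `b ∈ I₂ ∩ H₂`, then the images `j₁(H₁)` and
`j₂(H₂)` commute elementwise in `Perm U`. -/
theorem stmt19 {G₀ G₁ G₂ : Type u} [Group G₀] [Group G₁] [Group G₂]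
    (ι₁ : G₀ →* G₁) (ι₂ : G₀ →* G₂)
    (hι₁ : Function.Injective ι₁) (hι₂ : Function.Injective ι₂)
    (I₁ : Set G₁) (I₂ : Set G₂)
    (hone₁ : (1 : G₁) ∈ I₁) (hone₂ : (1 : G₂) ∈ I₂)
    (hrep₁ : ∀ g : G₁, ∃! r, r ∈ I₁ ∧ ∃ h : G₀, g = r * ι₁ h)
    (hrep₂ : ∀ g : G₂, ∃! r, r ∈ I₂ ∧ ∃ h : G₀, g = r * ι₂ h)
    (j₁ : G₁ → Equiv.Perm {p : G₀ × G₁ × G₂ // p.2.1 ∈ I₁ ∧ p.2.2 ∈ I₂})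
    (j₂ : G₂ → Equiv.Perm {p : G₀ × G₁ × G₂ // p.2.1 ∈ I₁ ∧ p.2.2 ∈ I₂})
    (hj₁ : ∀ (g : G₁) (u : {p : G₀ × G₁ × G₂ // p.2.1 ∈ I₁ ∧ p.2.2 ∈ I₂}),
        ((j₁ g u).1.2.2 = u.1.2.2) ∧
        ((j₁ g u).1.2.1 * ι₁ ((j₁ g u).1.1) = u.1.2.1 * ι₁ u.1.1 * g))
    (hj₂ : ∀ (g : G₂) (u : {p : G₀ × G₁ × G₂ // p.2.1 ∈ I₁ ∧ p.2.2 ∈ I₂}),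
        ((j₂ g u).1.2.1 = u.1.2.1) ∧
        ((j₂ g u).1.2.2 * ι₂ ((j₂ g u).1.1) = u.1.2.2 * ι₂ u.1.1 * g))
    (H₁ : Subgroup G₁) (H₂ : Subgroup G₂)
    -- `H₁` commutes elementwise with `G₀`
    (hcomm₁ : ∀ h ∈ H₁, ∀ g : G₀, Commute h (ι₁ g))
    -- `H₁ = ⋃ {b·H₀ : b ∈ I₁ ∩ H₁}` where `H₀ = H₁ ∩ G₀`
    (hcover₁ : ∀ h ∈ H₁, ∃ b, b ∈ I₁ ∧ b ∈ H₁ ∧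
        ∃ g : G₀, ι₁ g ∈ H₁ ∧ h = b * ι₁ g)
    -- `I₁` is closed under right multiplication by elements of `I₁ ∩ H₁`
    (hclosed : ∀ g ∈ I₁, ∀ b, b ∈ I₁ → b ∈ H₁ → g * b ∈ I₁)
    -- `H₂` commutes elementwise with `H₀`
    (hcomm₂ : ∀ h ∈ H₂, ∀ g : G₀, ι₁ g ∈ H₁ → Commute h (ι₂ g))
    -- `H₂ = ⋃ {b·H₀ : b ∈ I₂ ∩ H₂}`
    (hcover₂ : ∀ h ∈ H₂, ∃ b, b ∈ I₂ ∧ b ∈ H₂ ∧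
        ∃ g : G₀, ι₁ g ∈ H₁ ∧ h = b * ι₂ g) :
    ∀ a ∈ H₁, ∀ b ∈ H₂, Commute (j₁ a) (j₂ b) := by
  intro a ha b hb
  have uniq₁ : ∀ r₁ r₂ : G₁, r₁ ∈ I₁ → r₂ ∈ I₁ → ∀ h₁ h₂ : G₀,
      r₁ * ι₁ h₁ = r₂ * ι₁ h₂ → r₁ = r₂ ∧ h₁ = h₂ := by
    intro r₁ r₂ hr₁ hr₂ h₁ h₂ heq
    obtain ⟨r, _, hu⟩ := hrep₁ (r₁ * ι₁ h₁)
    have e₁ : r₁ = r := hu r₁ ⟨hr₁, h₁, rfl⟩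
    have e₂ : r₂ = r := hu r₂ ⟨hr₂, h₂, heq⟩
    have hrr : r₁ = r₂ := e₁.trans e₂.symm
    rw [hrr] at heq
    exact ⟨hrr, hι₁ (mul_left_cancel heq)⟩
  have uniq₂ : ∀ r₁ r₂ : G₂, r₁ ∈ I₂ → r₂ ∈ I₂ → ∀ h₁ h₂ : G₀,
      r₁ * ι₂ h₁ = r₂ * ι₂ h₂ → r₁ = r₂ ∧ h₁ = h₂ := by
    intro r₁ r₂ hr₁ hr₂ h₁ h₂ heq
    obtain ⟨r, _, hu⟩ := hrep₂ (r₁ * ι₂ h₁)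
    have e₁ : r₁ = r := hu r₁ ⟨hr₁, h₁, rfl⟩
    have e₂ : r₂ = r := hu r₂ ⟨hr₂, h₂, heq⟩
    have hrr : r₁ = r₂ := e₁.trans e₂.symm
    rw [hrr] at heq
    exact ⟨hrr, hι₂ (mul_left_cancel heq)⟩
  obtain ⟨b₁, hb₁I, hb₁H, h₀, hh₀, hadec⟩ := hcover₁ a ha
  -- h₀ centralizes G₀
  have hcent : ∀ g : G₀, h₀ * g = g * h₀ := by
    intro g
    apply hι₁
    have := hcomm₁ _ hh₀ g
    simpa [map_mul] using this.eq
  -- characterization of j₁ a on any point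
  have hj₁char : ∀ u : {p : G₀ × G₁ × G₂ // p.2.1 ∈ I₁ ∧ p.2.2 ∈ I₂},
      (j₁ a u).1.2.1 = u.1.2.1 * b₁ ∧ (j₁ a u).1.1 = h₀ * u.1.1 := by
    intro u
    have h2 := (hj₁ a u).2
    have key : u.1.2.1 * ι₁ u.1.1 * a = (u.1.2.1 * b₁) * ι₁ (h₀ * u.1.1) := by
      have hca : a * ι₁ u.1.1 = ι₁ u.1.1 * a := (hcomm₁ a ha u.1.1).eq
      rw [hadec]
      rw [map_mul]
      calc u.1.2.1 * ι₁ u.1.1 * (b₁ * ι₁ h₀)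
          = u.1.2.1 * (ι₁ u.1.1 * (b₁ * ι₁ h₀)) := by group
        _ = u.1.2.1 * ((b₁ * ι₁ h₀) * ι₁ u.1.1) := by
            rw [← hadec, ← hca, hadec]
        _ = (u.1.2.1 * b₁) * (ι₁ h₀ * ι₁ u.1.1) := by group
    rw [key] at h2
    exact uniq₁ _ _ (j₁ a u).2.1 (hclosed _ u.2.1 b₁ hb₁I hb₁H) _ _ h2
  -- now prove the permutations commute
  apply Equiv.ext
  intro u
  show (j₁ a) ((j₂ b) u) = (j₂ b) ((j₁ a) u)
  set v := j₂ b u with hv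
  set w := j₁ a u with hw
  -- facts
  have hv21 : v.1.2.1 = u.1.2.1 := (hj₂ b u).1
  have hw22 : w.1.2.2 = u.1.2.2 := (hj₁ a u).1
  have hw21 : w.1.2.1 = u.1.2.1 * b₁ := (hj₁char u).1
  have hw1 : w.1.1 = h₀ * u.1.1 := (hj₁char u).2
  have hL21 : (j₁ a v).1.2.1 = u.1.2.1 * b₁ := by rw [(hj₁char v).1, hv21]
  have hL1 : (j₁ a v).1.1 = h₀ * v.1.1 := (hj₁char v).2
  have hL22 : (j₁ a v).1.2.2 = v.1.2.2 := (hj₁ a v).1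
  have hR21 : (j₂ b w).1.2.1 = u.1.2.1 * b₁ := by rw [(hj₂ b w).1, hw21]
  -- characterize j₂ b w in terms of v
  have key2 : w.1.2.2 * ι₂ w.1.1 * b = v.1.2.2 * ι₂ (h₀ * v.1.1) := by
    have hcb : b * ι₂ h₀ = ι₂ h₀ * b := (hcomm₂ b hb h₀ hh₀).eq
    have hvdef := (hj₂ b u).2
    rw [hw22, hw1, hcent, map_mul]
    calc u.1.2.2 * (ι₂ u.1.1 * ι₂ h₀) * b
        = (u.1.2.2 * ι₂ u.1.1 * b) * ι₂ h₀ := by simp only [mul_assoc]; rw [← hcb]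
      _ = (v.1.2.2 * ι₂ v.1.1) * ι₂ h₀ := by rw [← hvdef]
      _ = v.1.2.2 * ι₂ (v.1.1 * h₀) := by rw [map_mul]; group
      _ = v.1.2.2 * ι₂ (h₀ * v.1.1) := by rw [hcent]
  have h2w := (hj₂ b w).2
  rw [key2] at h2w
  have huq := uniq₂ _ _ (j₂ b w).2.2 v.2.2 _ _ h2w
  -- assemble equality of points
  apply Subtype.ext
  apply Prod.ext
  · rw [hL1, huq.2]
  · apply Prod.ext
    · rw [hL21, hR21]
    · rw [hL22, huq.1]
end
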